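/- Let K be a field of characteristic zero and f ∈ K[x_1,...,x_n] a form of degree d with polarization f̃ : (K^n)^d → K. Then 2^{-d}·str(f̃) ≤ str(f) ≤ str(f̃), where str(f̃) is the strength of f̃ regarded as a form of degree d on the dn variables of (K^n)^d. -/

import Mathlib

open MvPolynomial

/-- `StrLE I d f r` : the form `f` (of degree `d`) has strength at most `r` relative to the
homogeneous ideal `I`, i.e. `f ≡ g₁h₁+...+g_rh_r mod I` with the `gᵢ, hᵢ` forms of
strictly lower positive degree. -/
def StrLE {K : Type u} {σ : Type v} [CommRing K] (I : Ideal (MvPolynomial σ K)) (d : ℕ)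
    (f : MvPolynomial σ K) (r : ℕ) : Prop :=
  ∃ g h : Fin r → MvPolynomial σ K,
    (∀ t, ∃ a, 0 < a ∧ a < d ∧ (g t).IsHomogeneous a) ∧
    (∀ t, ∃ b, 0 < b ∧ b < d ∧ (h t).IsHomogeneous b) ∧
    f - ∑ t, g t * h t ∈ I

/-- The relative strength of a degree-`d` form `f` modulo the ideal `I`, as an
extended natural number (`⊤` if no decomposition exists, e.g. for linear forms). -/
noncomputable def relStrength {K : Type u} {σ : Type v} [CommRing K]
    (I : Ideal (MvPolynomial σ K)) (d : ℕ) (f : MvPolynomial σ K) : ℕ∞ :=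
  ⨅ r : {r : ℕ // StrLE I d f r}, (r.1 : ℕ∞)

/-- The collective relative strength of the forms `f 0, ..., f (s-1)` (all of degree `d`)
modulo the ideal `I`: the minimum over nonzero coefficient tuples of the relative strength
of the corresponding linear combination. -/
noncomputable def relStrengthFam {K : Type u} {σ : Type v} [CommRing K]
    (I : Ideal (MvPolynomial σ K)) (d s : ℕ) (f : ℕ → MvPolynomial σ K) : ℕ∞ :=
  ⨅ a : {a : ℕ → K // ∃ j < s, a j ≠ 0},
    relStrength I d (∑ j ∈ Finset.range s, MvPolynomial.C (a.1 j) * f j)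

/-- A tower of forms: `h` layers; layer `i < h` consists of the forms
`form i j` for `j < size i`, all of degree `deg i`. -/
structure Tower (K : Type u) [CommRing K] (σ : Type v) where
  h : ℕ
  deg : ℕ → ℕ
  size : ℕ → ℕ
  form : ℕ → ℕ → MvPolynomial σ K

namespace Tower

variable {K : Type u} {L : Type w} {σ : Type v} [CommRing K]

/-- All forms of the tower are homogeneous of the degree of their layer. -/
def IsHomog (F : Tower K σ) : Prop :=
  ∀ i < F.h, ∀ j < F.size i, (F.form i j).IsHomogeneous (F.deg i)

/-- The ideal generated by the layers below layer `i`. -/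
noncomputable def lowerIdeal (F : Tower K σ) (i : ℕ) : Ideal (MvPolynomial σ K) :=
  Ideal.span {p | ∃ i' < i, ∃ j < F.size i', p = F.form i' j}

/-- The ideal generated by all forms of the tower. -/
noncomputable def idealOfAll (F : Tower K σ) : Ideal (MvPolynomial σ K) := F.lowerIdeal F.h

/-- `s_i + s_{i+1} + ... + s_h`. -/
def tailSize (F : Tower K σ) (i : ℕ) : ℕ := ∑ i' ∈ Finset.Ico i F.h, F.size i'

/-- The total number of forms in the tower. -/
def totalSize (F : Tower K σ) : ℕ := F.tailSize 0

/-- The tower is `(A,B,r)`-strong relative to an ambient ideal `J`: for each layer `i`,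
the collective relative strength of layer `i` modulo `J` and the lower layers
exceeds `A(s_i+...+s_h+r)^B`. -/
def IsStrongOver (J : Ideal (MvPolynomial σ K)) (F : Tower K σ) (A B r : ℕ) : Prop :=
  ∀ i < F.h, ((A * (F.tailSize i + r) ^ B : ℕ) : ℕ∞) <
    relStrengthFam (J ⊔ F.lowerIdeal i) (F.deg i) (F.size i) (F.form i)

/-- The tower is `(A,B,r)`-strong. -/
def IsStrong (F : Tower K σ) (A B r : ℕ) : Prop := F.IsStrongOver ⊥ A B r

/-- The tower obtained by applying a ring homomorphism to all coefficients. -/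
noncomputable def map [CommRing L] (φ : K →+* L) (F : Tower K σ) : Tower L σ where
  h := F.h
  deg := F.deg
  size := F.size
  form := fun i j => MvPolynomial.map φ (F.form i j)

/-- The tower is absolutely `(A,B,r)`-strong: it is `(A,B,r)`-strong after extending
scalars to an algebraic closure. -/
def AbsStrong {K : Type u} [Field K] (F : Tower K σ) (A B r : ℕ) : Prop :=
  (F.map (algebraMap K (AlgebraicClosure K))).IsStrong A B r

/-- The tower obtained by placing the layers of `G` above those of `F`. -/
def append (F G : Tower K σ) : Tower K σ where
  h := F.h + G.h
  deg := fun i => if i < F.h then F.deg i else G.deg (i - F.h)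
  size := fun i => if i < F.h then F.size i else G.size (i - F.h)
  form := fun i => if i < F.h then F.form i else G.form (i - F.h)

/-- The common zero locus of all forms of the tower. -/
def zeroSet (F : Tower K σ) : Set (σ → K) :=
  {x | ∀ i < F.h, ∀ j < F.size i, MvPolynomial.eval x (F.form i j) = 0}

/-- The `K`-rational points of `Z(F)` are Zariski dense in `Z(F)` (taken over an
algebraic closure of `K`): every polynomial vanishing on the image of the `K`-rational
zeros vanishes on all of `Z(F)`. -/
def KPointsDense {K : Type u} [Field K] (F : Tower K σ) : Prop :=
  ∀ p : MvPolynomial σ (AlgebraicClosure K),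
    (∀ y ∈ F.zeroSet, MvPolynomial.eval (fun t => algebraMap K (AlgebraicClosure K) (y t)) p = 0) →
    ∀ x ∈ (F.map (algebraMap K (AlgebraicClosure K))).zeroSet, MvPolynomial.eval x p = 0

end Tower

/-- The codimension (height) of the Zariski-closed set cut out by an ideal: the infimum
of the heights of the primes containing it. -/
noncomputable def idealCodim {R : Type u} [CommRing R] (I : Ideal R) : ℕ∞ :=
  ⨅ p : {p : PrimeSpectrum R // I ≤ p.asIdeal}, Order.height p.1

/-- `taylorSubst m f` is `f(x_1 + ... + x_m)`, a polynomial in `m` blocks of `n` variables. -/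
noncomputable def taylorSubst {K : Type u} [CommSemiring K] {n : ℕ} (m : ℕ)
    (f : MvPolynomial (Fin n) K) : MvPolynomial (Fin m × Fin n) K :=
  MvPolynomial.aeval (fun i : Fin n => ∑ k : Fin m, MvPolynomial.X (k, i)) f

/-- `taylorComponent m f e` is the multi-homogeneous component `f^e` of multi-degree `e`
in the Taylor expansion `f(x_1 + ... + x_m) = Σ_{e} f^e(x_1, ..., x_m)`. -/
noncomputable def taylorComponent {K : Type u} [CommSemiring K] {n : ℕ} (m : ℕ)
    (f : MvPolynomial (Fin n) K) (e : Fin m →₀ ℕ) : MvPolynomial (Fin m × Fin n) K :=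
  MvPolynomial.weightedHomogeneousComponent
    (fun v : Fin m × Fin n => Finsupp.single v.1 1) e (taylorSubst m f)

/-- The polarization `f̃` of a degree-`d` form `f`: the multilinear Taylor component
`f^{(1,...,1)}` of `f(h_1 + ... + h_d)`. -/
noncomputable def polarization {K : Type u} [CommSemiring K] {n : ℕ} (d : ℕ)
    (f : MvPolynomial (Fin n) K) : MvPolynomial (Fin d × Fin n) K :=
  taylorComponent d f (Finsupp.equivFunOnFinite.symm fun _ => 1)

lemma prod_X_pow' {R σ τ : Type*} [CommSemiring R] (f : σ → τ) (ν : σ →₀ ℕ) :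
    (ν.prod fun v k => (X (f v) : MvPolynomial τ R) ^ k) = monomial (ν.mapDomain f) 1 := by
  rw [Finsupp.mapDomain, monomial_finsupp_sum_index, map_one, one_mul]
  exact Finsupp.prod_congr fun v _ => by rw [X_pow_eq_monomial]

lemma phi_monomial {R : Type*} [CommSemiring R] {n d : ℕ} (ν : Fin d × Fin n →₀ ℕ) (c : R) :
    aeval (fun v : Fin d × Fin n => C (X v.2) * X v.1 :
        Fin d × Fin n → MvPolynomial (Fin d) (MvPolynomial (Fin n) R)) (monomial ν c)
      = monomial (ν.mapDomain Prod.fst) (monomial (ν.mapDomain Prod.snd) c) := by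
  rw [aeval_monomial]
  have h1 : (ν.prod fun v k => ((C (X v.2) * X v.1 :
      MvPolynomial (Fin d) (MvPolynomial (Fin n) R))) ^ k)
      = (ν.prod fun v k => (C (X v.2) : MvPolynomial (Fin d) (MvPolynomial (Fin n) R)) ^ k) *
        (ν.prod fun v k => (X v.1 : MvPolynomial (Fin d) (MvPolynomial (Fin n) R)) ^ k) := by
    rw [← Finsupp.prod_mul]
    exact Finsupp.prod_congr fun v _ => mul_pow _ _ _
  rw [h1]
  have h2 : (ν.prod fun v k => (C (X v.2) : MvPolynomial (Fin d) (MvPolynomial (Fin n) R)) ^ k)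
      = C (ν.prod fun v k => (X v.2 : MvPolynomial (Fin n) R) ^ k) := by
    rw [map_finsuppProd]
    exact Finsupp.prod_congr fun v _ => by rw [map_pow]
  rw [h2, prod_X_pow' Prod.fst, prod_X_pow' Prod.snd]
  have h3 : (algebraMap R (MvPolynomial (Fin d) (MvPolynomial (Fin n) R))) c = C (C c) := rfl
  rw [h3, ← mul_assoc, ← map_mul, C_mul_monomial, mul_one, C_mul_monomial, mul_one]

lemma weightFst {n d : ℕ} (ν : Fin d × Fin n →₀ ℕ) :
    (Finsupp.weight fun v : Fin d × Fin n => Finsupp.single v.1 1) ν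
      = Finsupp.mapDomain Prod.fst ν := by
  rw [Finsupp.mapDomain, Finsupp.weight_apply]
  exact Finsupp.sum_congr fun v _ => by
    rw [Finsupp.smul_single, smul_eq_mul, mul_one]

lemma coeff_phi {R : Type*} [CommSemiring R] {n d : ℕ} (e : Fin d →₀ ℕ)
    (p : MvPolynomial (Fin d × Fin n) R) :
    coeff e (aeval (fun v : Fin d × Fin n => C (X v.2) * X v.1 :
        Fin d × Fin n → MvPolynomial (Fin d) (MvPolynomial (Fin n) R)) p)
      = rename Prod.snd (weightedHomogeneousComponent
          (fun v : Fin d × Fin n => Finsupp.single v.1 1) e p) := by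
  classical
  induction p using MvPolynomial.induction_on' with
  | monomial ν c =>
    rw [phi_monomial, coeff_monomial]
    by_cases h : Finsupp.mapDomain Prod.fst ν = e
    · rw [if_pos h,
        IsWeightedHomogeneous.weightedHomogeneousComponent_same
          (isWeightedHomogeneous_monomial _ _ _ ((weightFst ν).trans h)),
        rename_monomial]
    · rw [if_neg h,
        IsWeightedHomogeneous.weightedHomogeneousComponent_ne
          _ (isWeightedHomogeneous_monomial _ _ _ (weightFst ν)) ?_, map_zero]
      exact fun he => h he.symm
  | add p q hp hq =>
    rw [map_add, coeff_add, hp, hq, map_add, map_add]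

lemma aeval_C_X_mul {R : Type*} [CommSemiring R] {n : ℕ} {d : ℕ}
    {f : MvPolynomial (Fin n) R} (hf : f.IsHomogeneous d)
    (T : MvPolynomial (Fin d) (MvPolynomial (Fin n) R)) :
    aeval (fun i : Fin n => C (X i) * T) f = C f * T ^ d := by
  conv_lhs => rw [f.as_sum]
  rw [map_sum]
  conv_rhs => rw [f.as_sum]
  rw [map_sum, Finset.sum_mul]
  refine Finset.sum_congr rfl fun ν hν => ?_
  have hdeg : ν.degree = d := by
    rw [Finsupp.degree_eq_weight_one]
    exact hf (mem_support_iff.mp hν)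
  rw [aeval_monomial]
  have h1 : (ν.prod fun i k => (C (X i) * T) ^ k)
      = (ν.prod fun i k => (C (X i) : MvPolynomial (Fin d) (MvPolynomial (Fin n) R)) ^ k) *
        (ν.prod fun i k => T ^ k) := by
    rw [← Finsupp.prod_mul]
    exact Finsupp.prod_congr fun v _ => mul_pow _ _ _
  have h2 : (ν.prod fun i k => (C (X i) : MvPolynomial (Fin d) (MvPolynomial (Fin n) R)) ^ k)
      = C (monomial ν 1) := by
    rw [show (monomial ν (1:R)) = ν.prod fun v k => X v ^ k by
      rw [monomial_eq, map_one, one_mul], map_finsuppProd]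
    exact Finsupp.prod_congr fun v _ => by rw [map_pow]
  have h3 : (ν.prod fun i k => T ^ k) = T ^ d := by
    rw [Finsupp.prod, Finset.prod_pow_eq_pow_sum]
    exact congrArg (T ^ ·) hdeg
  rw [h1, h2, h3]
  have h4 : (algebraMap R (MvPolynomial (Fin d) (MvPolynomial (Fin n) R)))
      (coeff ν f) = C (C (coeff ν f)) := rfl
  rw [h4, ← mul_assoc, ← map_mul, C_mul_monomial, mul_one]

lemma coeff_sum_X_pow {R : Type*} [CommSemiring R] (d : ℕ) :
    coeff (Finsupp.equivFunOnFinite.symm fun _ => 1)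
        ((∑ k : Fin d, X k : MvPolynomial (Fin d) R) ^ d) = (d.factorial : R) := by
  classical
  rw [Finset.sum_pow_eq_sum_piAntidiag]
  rw [MvPolynomial.coeff_sum]
  have hterm : ∀ k : Fin d → ℕ,
      coeff (Finsupp.equivFunOnFinite.symm fun _ => 1)
        ((Nat.multinomial Finset.univ k : MvPolynomial (Fin d) R) * ∏ i, X i ^ k i)
      = if Finsupp.equivFunOnFinite.symm k = Finsupp.equivFunOnFinite.symm (fun _ => (1:ℕ))
        then (Nat.multinomial Finset.univ k : R) else 0 := by
    intro k
    have hprod : (∏ i, (X i : MvPolynomial (Fin d) R) ^ k i)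
        = monomial (Finsupp.equivFunOnFinite.symm k) 1 := by
      rw [← prod_X_pow_eq_monomial]
      refine (Finset.prod_subset (Finset.subset_univ _) ?_).symm
      intro i _ hi
      have : (Finsupp.equivFunOnFinite.symm k) i = 0 := by
        simpa using Finsupp.notMem_support_iff.mp hi
      rw [show k i = (Finsupp.equivFunOnFinite.symm k) i from rfl, this, pow_zero]
    rw [hprod, show ((Nat.multinomial Finset.univ k : MvPolynomial (Fin d) R))
        = C ((Nat.multinomial Finset.univ k : R)) by rw [map_natCast], coeff_C_mul,
      coeff_monomial]
    split_ifs <;> simp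
  rw [Finset.sum_congr rfl fun k _ => hterm k]
  rw [Finset.sum_eq_single (fun _ => 1)]
  · rw [if_pos rfl]
    have hs : Nat.multinomial (Finset.univ : Finset (Fin d)) (fun _ => (1:ℕ)) = d.factorial := by
      have := Nat.multinomial_spec (Finset.univ : Finset (Fin d)) (fun _ => 1)
      simpa using this
    rw [hs]
  · intro k _ hk
    rw [if_neg]
    intro h
    exact hk (funext fun j => by
      have := congrArg (fun m => m j) h
      simpa using this)
  · intro h
    exact absurd (by
      rw [Finset.mem_piAntidiag]
      exact ⟨by simp, fun i _ => Finset.mem_univ i⟩) h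

lemma rename_snd_polarization {R : Type*} [CommSemiring R] {n d : ℕ}
    {f : MvPolynomial (Fin n) R} (hf : f.IsHomogeneous d) :
    rename Prod.snd (polarization d f) = (d.factorial : MvPolynomial (Fin n) R) * f := by
  rw [polarization, taylorComponent, ← coeff_phi]
  have hcomp : aeval (fun v : Fin d × Fin n => C (X v.2) * X v.1 :
        Fin d × Fin n → MvPolynomial (Fin d) (MvPolynomial (Fin n) R)) (taylorSubst d f)
      = C f * (∑ k : Fin d, X k) ^ d := by
    have hfun : (fun i : Fin n => (aeval fun v : Fin d × Fin n => (C (X v.2) * X v.1 :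
          MvPolynomial (Fin d) (MvPolynomial (Fin n) R))) ((∑ k : Fin d, X (k, i) : MvPolynomial (Fin d × Fin n) R)))
        = fun i : Fin n => C (X i) * ∑ k : Fin d, X k := by
      funext i
      rw [map_sum, Finset.mul_sum]
      refine Finset.sum_congr rfl fun k _ => by rw [aeval_X]
    rw [taylorSubst, ← AlgHom.comp_apply, comp_aeval, hfun, aeval_C_X_mul hf]
  rw [hcomp, coeff_C_mul, coeff_sum_X_pow, mul_comm]

section strength
variable {K : Type u} {K' : Type u'} {σ : Type v} {σ' : Type v'} [CommRing K] [CommRing K']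

lemma relStrength_le_of_imp {I : Ideal (MvPolynomial σ K)} {I' : Ideal (MvPolynomial σ' K')}
    {d d' : ℕ} {f : MvPolynomial σ K} {f' : MvPolynomial σ' K'}
    (h : ∀ r, StrLE I d f r → StrLE I' d' f' r) :
    relStrength I' d' f' ≤ relStrength I d f :=
  le_iInf fun p => iInf_le_of_le ⟨p.1, h p.1 p.2⟩ le_rfl

lemma relStrength_le_mul {I : Ideal (MvPolynomial σ K)} {I' : Ideal (MvPolynomial σ' K')}
    {d d' : ℕ} {f : MvPolynomial σ K} {f' : MvPolynomial σ' K'} {c : ℕ} (hc : c ≠ 0)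
    (h : ∀ r, StrLE I d f r → StrLE I' d' f' (c * r)) :
    relStrength I' d' f' ≤ (c : ℕ∞) * relStrength I d f := by
  classical
  by_cases hne : ∃ r, StrLE I d f r
  · have h1 : relStrength I d f = (Nat.find hne : ℕ∞) := by
      refine le_antisymm (iInf_le_of_le ⟨Nat.find hne, Nat.find_spec hne⟩ le_rfl) ?_
      exact le_iInf fun p => by exact_mod_cast Nat.find_min' hne p.2
    rw [h1, ← Nat.cast_mul]
    exact iInf_le_of_le ⟨c * Nat.find hne, h _ (Nat.find_spec hne)⟩ le_rfl
  · haveI : IsEmpty {r : ℕ // StrLE I d f r} := ⟨fun p => hne ⟨p.1, p.2⟩⟩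
    have h2 : relStrength I d f = ⊤ := by rw [relStrength, iInf_of_empty]
    rw [h2, ENat.mul_top (by exact_mod_cast hc : (c : ℕ∞) ≠ 0)]
    exact le_top

end strength

lemma isHomog_wcomp {R : Type*} [CommSemiring R] {σ : Type*} {M : Type*} [AddCommMonoid M]
    {w : σ → M} {p : MvPolynomial σ R} {a : ℕ} (hp : p.IsHomogeneous a) (e : M) :
    (weightedHomogeneousComponent w e p).IsHomogeneous a := by
  classical
  intro ν hν
  rw [coeff_weightedHomogeneousComponent] at hν
  split_ifs at hν with h
  · exact hp hν
  · exact absurd rfl hν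

lemma isHomog_taylorSubst {R : Type*} [CommSemiring R] {n : ℕ} (m : ℕ)
    {p : MvPolynomial (Fin n) R} {a : ℕ} (hp : p.IsHomogeneous a) :
    (taylorSubst m p).IsHomogeneous a := by
  have := hp.aeval (fun i : Fin n => ∑ k : Fin m, (X (k, i) : MvPolynomial (Fin m × Fin n) R))
    (n := 1) ?_
  · simpa [taylorSubst, aeval_eq_bind₁] using this
  · intro i
    exact IsHomogeneous.sum _ _ _ fun k _ => isHomogeneous_X _ _

lemma wcomp_mul {R σ τ : Type*} [CommSemiring R] [DecidableEq τ] (w : σ → τ →₀ ℕ)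
    (m : τ →₀ ℕ) (p q : MvPolynomial σ R) :
    weightedHomogeneousComponent w m (p * q)
      = ∑ ab ∈ Finset.HasAntidiagonal.antidiagonal m,
          weightedHomogeneousComponent w ab.1 p * weightedHomogeneousComponent w ab.2 q := by
  classical
  ext ν
  rw [coeff_weightedHomogeneousComponent, MvPolynomial.coeff_sum]
  have hterm : ∀ ab ∈ Finset.HasAntidiagonal.antidiagonal m,
      coeff ν (weightedHomogeneousComponent w ab.1 p * weightedHomogeneousComponent w ab.2 q)
      = ∑ αβ ∈ Finset.HasAntidiagonal.antidiagonal ν,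
          (if (Finsupp.weight w) αβ.1 = ab.1 then coeff αβ.1 p else 0) *
          (if (Finsupp.weight w) αβ.2 = ab.2 then coeff αβ.2 q else 0) := by
    intro ab _
    rw [coeff_mul]
    exact Finset.sum_congr rfl fun αβ _ => by
      rw [coeff_weightedHomogeneousComponent, coeff_weightedHomogeneousComponent]
  rw [Finset.sum_congr rfl hterm, Finset.sum_comm]
  by_cases H : (Finsupp.weight w) ν = m
  · rw [if_pos H, coeff_mul]
    refine Finset.sum_congr rfl fun αβ hαβ => ?_
    have hab : αβ.1 + αβ.2 = ν := Finset.HasAntidiagonal.mem_antidiagonal.mp hαβ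
    have hsum : (Finsupp.weight w) αβ.1 + (Finsupp.weight w) αβ.2 = m := by
      rw [← map_add, hab, H]
    rw [Finset.sum_eq_single ((Finsupp.weight w) αβ.1, (Finsupp.weight w) αβ.2)]
    · rw [if_pos rfl, if_pos rfl]
    · intro ab _ hne
      by_cases h1 : (Finsupp.weight w) αβ.1 = ab.1
      · have h2 : (Finsupp.weight w) αβ.2 ≠ ab.2 := fun h2 =>
          hne (Prod.ext h1.symm h2.symm)
        rw [if_neg h2, mul_zero]
      · rw [if_neg h1, zero_mul]
    · intro hmem
      exact absurd (Finset.HasAntidiagonal.mem_antidiagonal.mpr hsum) hmem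
  · rw [if_neg H]
    refine (Finset.sum_eq_zero fun αβ hαβ => Finset.sum_eq_zero fun ab hab => ?_).symm
    by_cases h1 : (Finsupp.weight w) αβ.1 = ab.1
    · by_cases h2 : (Finsupp.weight w) αβ.2 = ab.2
      · exfalso
        apply H
        rw [← Finset.HasAntidiagonal.mem_antidiagonal.mp hαβ, map_add, h1, h2,
          Finset.HasAntidiagonal.mem_antidiagonal.mp hab]
      · rw [if_neg h2, mul_zero]
    · rw [if_neg h1, zero_mul]

lemma strLE_of_sum {K : Type u} {σ : Type v} [CommRing K] {I : Ideal (MvPolynomial σ K)}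
    {d : ℕ} {f : MvPolynomial σ K} {ι : Type*} [Fintype ι] (G H : ι → MvPolynomial σ K)
    (hd : 1 < d)
    (hG : ∀ x, ∃ a, 0 < a ∧ a < d ∧ (G x).IsHomogeneous a)
    (hH : ∀ x, ∃ b, 0 < b ∧ b < d ∧ (H x).IsHomogeneous b)
    (hf : f - ∑ x, G x * H x ∈ I) {R : ℕ} (hcard : Fintype.card ι ≤ R) :
    StrLE I d f R := by
  classical
  let φ : ι ↪ Fin R := (Fintype.equivFin ι).toEmbedding.trans (Fin.castLEEmb hcard)
  have hhom : ∀ (G' : ι → MvPolynomial σ K),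
      (∀ x, ∃ a, 0 < a ∧ a < d ∧ (G' x).IsHomogeneous a) →
      ∀ t, ∃ a, 0 < a ∧ a < d ∧ ((Function.extend φ G' 0) t).IsHomogeneous a := by
    intro G' hG' t
    by_cases h : ∃ x, φ x = t
    · obtain ⟨x, hx⟩ := h
      rw [← hx, φ.injective.extend_apply]
      exact hG' x
    · rw [Function.extend_apply' _ _ _ h]
      exact ⟨1, one_pos, hd, isHomogeneous_zero _ _ _⟩
  refine ⟨Function.extend φ G 0, Function.extend φ H 0, hhom G hG, hhom H hH, ?_⟩
  have hsum : (∑ t, Function.extend φ G 0 t * Function.extend φ H 0 t) = ∑ x, G x * H x := by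
    rw [← Finset.sum_filter_add_sum_filter_not Finset.univ (fun t => ∃ x, φ x = t)]
    have h2 : ∑ t ∈ Finset.univ.filter (fun t => ¬∃ x, φ x = t),
        Function.extend φ G 0 t * Function.extend φ H 0 t = 0 := by
      refine Finset.sum_eq_zero fun t ht => ?_
      rw [Function.extend_apply' _ _ _ (Finset.mem_filter.mp ht).2, Pi.zero_apply, zero_mul]
    have h1 : Finset.univ.filter (fun t => ∃ x, φ x = t) = Finset.univ.image φ := by
      ext t
      simp [eq_comm]
    rw [h2, add_zero, h1, Finset.sum_image (fun x _ y _ h => φ.injective h)]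
    refine Finset.sum_congr rfl fun x _ => ?_
    rw [φ.injective.extend_apply, φ.injective.extend_apply]
  rw [hsum]
  exact hf

lemma card_antidiag_le (d : ℕ) :
    (Finset.HasAntidiagonal.antidiagonal (Finsupp.equivFunOnFinite.symm fun _ : Fin d => 1)).card ≤ 2 ^ d := by
  classical
  have h2 : (2 : ℕ) ^ d = Fintype.card (Fin d → Bool) := by
    simp [Fintype.card_fun]
  rw [h2, ← Finset.card_univ]
  refine Finset.card_le_card_of_injOn (fun ab k => decide (ab.1 k = 1))
    (fun _ _ => Finset.mem_univ _) ?_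
  intro ab hab ab' hab' h
  have hu : ∀ k, ab.1 k + ab.2 k = 1 := by
    intro k
    have := Finset.HasAntidiagonal.mem_antidiagonal.mp hab
    have := congrArg (fun m => m k) this
    simpa [Finsupp.add_apply] using this
  have hu' : ∀ k, ab'.1 k + ab'.2 k = 1 := by
    intro k
    have := Finset.HasAntidiagonal.mem_antidiagonal.mp hab'
    have := congrArg (fun m => m k) this
    simpa [Finsupp.add_apply] using this
  have h1 : ab.1 = ab'.1 := by
    ext k
    have hk := congrFun h k
    simp only [decide_eq_decide] at hk
    have hle : ab.1 k ≤ 1 := le_trans (Nat.le_add_right _ _) (hu k).le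
    have hle' : ab'.1 k ≤ 1 := le_trans (Nat.le_add_right _ _) (hu' k).le
    interval_cases hk1 : ab.1 k <;> interval_cases hk2 : ab'.1 k <;> simp_all
  have h2' : ab.2 = ab'.2 := by
    have h3 := (Finset.HasAntidiagonal.mem_antidiagonal.mp hab).trans (Finset.HasAntidiagonal.mem_antidiagonal.mp hab').symm
    rw [h1] at h3
    exact add_left_cancel h3
  exact Prod.ext h1 h2'


/-- For a form `f` of degree `d` over a field of characteristic zero,
with polarization `f̃` (a form of degree `d` on the `d·n` variables of `(Kⁿ)^d`):
`2^{-d}·str(f̃) ≤ str(f) ≤ str(f̃)`. -/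
theorem stmt_14 (K : Type) [Field K] [CharZero K] (n d : ℕ)
    (f : MvPolynomial (Fin n) K) (hf : f.IsHomogeneous d) :
    relStrength (⊥ : Ideal (MvPolynomial (Fin n) K)) d f
        ≤ relStrength (⊥ : Ideal (MvPolynomial (Fin d × Fin n) K)) d (polarization d f)
      ∧
    relStrength (⊥ : Ideal (MvPolynomial (Fin d × Fin n) K)) d (polarization d f)
        ≤ ((2 ^ d : ℕ) : ℕ∞) *
            relStrength (⊥ : Ideal (MvPolynomial (Fin n) K)) d f := by
  classical
  constructor
  · refine relStrength_le_of_imp fun r hr => ?_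
    obtain ⟨G, H, hG, hH, hmem⟩ := hr
    refine ⟨fun t => C ((d.factorial : K)⁻¹) * rename Prod.snd (G t),
            fun t => rename Prod.snd (H t), ?_, ?_, ?_⟩
    · intro t
      obtain ⟨a, h1, h2, h3⟩ := hG t
      exact ⟨a, h1, h2, (h3.rename_isHomogeneous).C_mul _⟩
    · intro t
      obtain ⟨b, h1, h2, h3⟩ := hH t
      exact ⟨b, h1, h2, h3.rename_isHomogeneous⟩
    · rw [Ideal.mem_bot] at hmem ⊢
      have heq : polarization d f = ∑ t, G t * H t := sub_eq_zero.mp hmem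
      have h4 := congrArg (rename (R := K) Prod.snd) heq
      rw [rename_snd_polarization hf, map_sum] at h4
      have hfac : ((d.factorial : K)) ≠ 0 := Nat.cast_ne_zero.mpr (Nat.factorial_ne_zero d)
      rw [sub_eq_zero]
      calc f = C ((d.factorial : K)⁻¹) * ((d.factorial : MvPolynomial (Fin n) K) * f) := by
            rw [show ((d.factorial : MvPolynomial (Fin n) K)) = C ((d.factorial : K)) from
              (map_natCast C _).symm, ← mul_assoc, ← map_mul, inv_mul_cancel₀ hfac,
              map_one, one_mul]
        _ = ∑ t, (C ((d.factorial : K)⁻¹) * rename Prod.snd (G t)) * rename Prod.snd (H t) := by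
            rw [h4, Finset.mul_sum]
            exact Finset.sum_congr rfl fun t _ => by rw [map_mul]; ring
  · refine relStrength_le_mul (pow_ne_zero d two_ne_zero) fun r hr => ?_
    obtain ⟨g, h, hg, hh, hmem⟩ := hr
    rw [Ideal.mem_bot, sub_eq_zero] at hmem
    rcases Nat.eq_zero_or_pos r with rfl | hrpos
    · have hf0 : f = 0 := by simpa using hmem
      refine ⟨fun t => 0, fun t => 0, fun t => t.elim0, fun t => t.elim0, ?_⟩
      have : polarization d f = 0 := by
        rw [hf0, polarization, taylorComponent, taylorSubst, map_zero, map_zero]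
      rw [this]
      simp
    · have hd2 : 1 < d := by
        obtain ⟨a, h1, h2, _⟩ := hg ⟨0, hrpos⟩
        omega
      set u : Fin d →₀ ℕ := Finsupp.equivFunOnFinite.symm fun _ => 1 with hu
      set w : Fin d × Fin n → Fin d →₀ ℕ := fun v => Finsupp.single v.1 1 with hw
      refine strLE_of_sum (ι := Fin r × {ab // ab ∈ Finset.HasAntidiagonal.antidiagonal u})
        (fun x => weightedHomogeneousComponent w x.2.1.1 (taylorSubst d (g x.1)))
        (fun x => weightedHomogeneousComponent w x.2.1.2 (taylorSubst d (h x.1)))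
        hd2 ?_ ?_ ?_ ?_
      · intro x
        obtain ⟨a, h1, h2, h3⟩ := hg x.1
        exact ⟨a, h1, h2, isHomog_wcomp (isHomog_taylorSubst d h3) _⟩
      · intro x
        obtain ⟨b, h1, h2, h3⟩ := hh x.1
        exact ⟨b, h1, h2, isHomog_wcomp (isHomog_taylorSubst d h3) _⟩
      · rw [Ideal.mem_bot, sub_eq_zero]
        have e1 : polarization d f
            = ∑ t, weightedHomogeneousComponent w u (taylorSubst d (g t) * taylorSubst d (h t)) := by
          rw [polarization, taylorComponent, hmem, taylorSubst, map_sum, map_sum]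
          exact Finset.sum_congr rfl fun t _ => by rw [map_mul]; rfl
        rw [e1, Fintype.sum_prod_type]
        refine Finset.sum_congr rfl fun t _ => ?_
        rw [wcomp_mul]
        exact (Finset.sum_coe_sort (Finset.HasAntidiagonal.antidiagonal u) _).symm
      · have hcard : Fintype.card (Fin r × {ab // ab ∈ Finset.HasAntidiagonal.antidiagonal u})
            = r * (Finset.HasAntidiagonal.antidiagonal u).card := by
          simp [Fintype.card_coe]
        rw [hcard, mul_comm]
        exact Nat.mul_le_mul_right r (card_antidiag_le d)
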